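/- Let Λ and H be countable discrete groups with Λ having at least two elements. Then the wreath product Λ ≀ H is residually finite if and only if Λ and H are both residually finite and either H is finite or Λ is abelian. -/

import Mathlib

universe u v w

/-- Conjugation by `g` as a homomorphism of a normal subgroup `N`: `n ↦ g⁻¹ n g`. -/
def conjHom {G : Type u} [Group G] {N : Subgroup G} (hN : N.Normal) (g : G) : N →* N where
  toFun n := ⟨g⁻¹ * (n : G) * g, by simpa using hN.conj_mem (n : G) n.2 g⁻¹⟩
  map_one' := by ext; simp
  map_mul' a b := by ext; simp [mul_assoc]

/-- The conjugate representation `σ^g`, `σ^g(n) = σ(g⁻¹ n g)`. -/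
def conjRep {G : Type u} [Group G] {N : Subgroup G} (hN : N.Normal) {m : ℕ}
    (σ : N →* Matrix.unitaryGroup (Fin m) ℂ) (g : G) : N →* Matrix.unitaryGroup (Fin m) ℂ :=
  σ.comp (conjHom hN g)

/-- Unitary equivalence of two finite-dimensional unitary representations. -/
def UnitarilyEquiv {G : Type u} [Group G] {m : ℕ}
    (σ τ : G →* Matrix.unitaryGroup (Fin m) ℂ) : Prop :=
  ∃ V : Matrix.unitaryGroup (Fin m) ℂ, ∀ g : G, τ g = V * σ g * V⁻¹

/-- Irreducibility of a finite-dimensional unitary representation. -/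
def IsIrreducibleRep {G : Type u} [Group G] {m : ℕ}
    (σ : G →* Matrix.unitaryGroup (Fin m) ℂ) : Prop :=
  ∀ W : Submodule ℂ (Fin m → ℂ),
    (∀ g : G, ∀ v ∈ W, (σ g : Matrix (Fin m) (Fin m) ℂ).mulVec v ∈ W) → W = ⊥ ∨ W = ⊤

/-- A representation of `N` has finite `H`-orbit if the conjugates `σ^h`, `h ∈ H`, fall into
finitely many unitary equivalence classes. -/
def HasFiniteHOrbit {G : Type u} [Group G] {N : Subgroup G} (hN : N.Normal) (H : Subgroup G)
    {m : ℕ} (σ : N →* Matrix.unitaryGroup (Fin m) ℂ) : Prop :=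
  ∃ S : Finset (N →* Matrix.unitaryGroup (Fin m) ℂ),
    ∀ h ∈ H, ∃ τ ∈ S, UnitarilyEquiv (conjRep hN σ h) τ

/-- `(K, β)` is a Bohr compactification of `G`. -/
def IsBohrCompactification (G : Type u) [Group G] [TopologicalSpace G]
    (K : Type v) [Group K] [TopologicalSpace K] [IsTopologicalGroup K] [CompactSpace K]
    [T2Space K] (β : G →* K) : Prop :=
  Continuous β ∧ DenseRange β ∧
    ∀ (L : Type w) [Group L] [TopologicalSpace L] [IsTopologicalGroup L] [CompactSpace L]
      [T2Space L] (α : G →* L), Continuous α →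
        ∃ α' : K →* L, Continuous α' ∧ α = α'.comp β

/-- `(K, α)` is a profinite completion of `G`. -/
def IsProfiniteCompletion (G : Type u) [Group G] [TopologicalSpace G]
    (K : Type v) [Group K] [TopologicalSpace K] [IsTopologicalGroup K] [CompactSpace K]
    [T2Space K] [TotallyDisconnectedSpace K] (α : G →* K) : Prop :=
  Continuous α ∧ DenseRange α ∧
    ∀ (L : Type w) [Group L] [TopologicalSpace L] [IsTopologicalGroup L] [CompactSpace L]
      [T2Space L] [TotallyDisconnectedSpace L] (γ : G →* L), Continuous γ →
        ∃ γ' : K →* L, Continuous γ' ∧ γ = γ'.comp α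
/-- The restricted direct product `⊕_{h ∈ H} Λ`: finitely supported functions `H → Λ`. -/
def restrictedProduct (H : Type u) (Λ : Type v) [Group Λ] : Subgroup (H → Λ) where
  carrier := {f | (Function.mulSupport f).Finite}
  one_mem' := by simp
  mul_mem' := by
    intro f g hf hg
    exact Set.Finite.subset (hf.union hg) (Function.mulSupport_mul f g)
  inv_mem' := by
    intro f hf
    simpa using hf

/-- The shift of a finitely supported function: `(h · f)(h') = f (h⁻¹ h')`. -/
def shiftEquiv (Λ : Type v) (H : Type u) [Group Λ] [Group H] (h : H) :
    restrictedProduct H Λ ≃* restrictedProduct H Λ where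
  toFun f := ⟨fun h' => (f : H → Λ) (h⁻¹ * h'), by
    refine Set.Finite.subset (f.2.image (h * ·)) ?_
    intro h' hh'
    exact ⟨h⁻¹ * h', hh', by group⟩⟩
  invFun f := ⟨fun h' => (f : H → Λ) (h * h'), by
    refine Set.Finite.subset (f.2.image (h⁻¹ * ·)) ?_
    intro h' hh'
    exact ⟨h * h', hh', by group⟩⟩
  left_inv f := by ext h'; simp
  right_inv f := by ext h'; simp
  map_mul' f g := by ext h'; simp [Subgroup.coe_mul]

/-- The shift action of `H` on `⊕_{h ∈ H} Λ`. -/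
def shiftAut (Λ : Type v) (H : Type u) [Group Λ] [Group H] :
    H →* MulAut (restrictedProduct H Λ) where
  toFun h := shiftEquiv Λ H h
  map_one' := by
    ext f h'
    simp [shiftEquiv]
  map_mul' h₁ h₂ := by
    ext f h'
    simp [shiftEquiv, mul_assoc]

/-- The wreath product `Λ ≀ H`. -/
def Wreath (Λ : Type v) (H : Type u) [Group Λ] [Group H] : Type (max u v) :=
  restrictedProduct H Λ ⋊[shiftAut Λ H] H

instance (Λ : Type v) (H : Type u) [Group Λ] [Group H] : Group (Wreath Λ H) :=
  inferInstanceAs (Group (restrictedProduct H Λ ⋊[shiftAut Λ H] H))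
/-- A discrete group is residually finite if every nontrivial element is sent to a nontrivial
element by some homomorphism onto a finite group. -/
def IsRFGroup (G : Type u) [Group G] : Prop :=
  ∀ g : G, g ≠ 1 → ∃ (F : Type) (_ : Group F) (_ : Finite F) (π : G →* F),
    Function.Surjective π ∧ π g ≠ 1

section AuxRF

open Function

/-- RF follows from separating homomorphisms without surjectivity,
into finite groups of an arbitrary universe. -/
lemma isRF_of_sep {G : Type u_9} [Group G]
    (h : ∀ g : G, g ≠ 1 → ∃ (F : Type w) (_ : Group F) (_ : Finite F) (φ : G →* F), φ g ≠ 1) :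
    IsRFGroup G := by
  intro g hg
  obtain ⟨F, _, _, φ, hφ⟩ := h g hg
  haveI : Small.{0} F := Countable.toSmall F
  haveI : Finite (Shrink F) := Finite.of_equiv F (equivShrink F)
  let ψ : F →* Shrink F := MonoidHom.mk' (equivShrink F) (fun a b => equivShrink_mul a b)
  have hψinj : Function.Injective ψ := (equivShrink F).injective
  refine ⟨(ψ.comp φ).range, inferInstance, inferInstance, (ψ.comp φ).rangeRestrict,
    MonoidHom.rangeRestrict_surjective _, ?_⟩
  intro hcon
  apply hφ
  have h1 : ψ (φ g) = 1 := by
    have h2 := congrArg (Subtype.val) hcon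
    simpa using h2
  have h3 := hψinj (h1.trans (map_one ψ).symm)
  simpa using h3

lemma isRF_of_injective {K : Type*} {G : Type*} [Group K] [Group G]
    (ι : K →* G) (hι : Function.Injective ι) (hG : IsRFGroup G) : IsRFGroup K := by
  apply isRF_of_sep
  intro k hk
  obtain ⟨F, _, _, φ, _, hφ⟩ := hG (ι k) (fun hc => hk (hι (by simpa using hc)))
  exact ⟨F, inferInstance, inferInstance, φ.comp ι, by simpa using hφ⟩

/-- Separate a finite set by a homomorphism to a finite group. -/
lemma sep_finset {H : Type*} [Group H] (hH : IsRFGroup H) (T : Finset H) :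
    ∃ (Q : Type) (_ : Group Q) (_ : Finite Q) (q : H →* Q),
      ∀ x ∈ T, ∀ y ∈ T, q x = q y → x = y := by
  classical
  set D : Finset H := ((T ×ˢ T).filter fun p => p.1 ≠ p.2).image fun p => p.1 * p.2⁻¹ with hD
  have hD1 : ∀ d ∈ D, d ≠ 1 := by
    intro d hd
    simp only [hD, Finset.mem_image, Finset.mem_filter, Finset.mem_product] at hd
    obtain ⟨⟨x, y⟩, ⟨_, hxy⟩, rfl⟩ := hd
    simpa [mul_inv_eq_one] using hxy
  let e := D.equivFin
  choose F grp fin φ hsur hφ using fun i : Fin D.card => hH (e.symm i).1 (hD1 _ (e.symm i).2)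
  letI : ∀ i : Fin D.card, Group (F i) := grp
  haveI : ∀ i : Fin D.card, Finite (F i) := fin
  refine ⟨∀ i : Fin D.card, F i, inferInstance, inferInstance, Pi.monoidHom φ, ?_⟩
  intro x hx y hy hxy
  by_contra hne
  have hdmem : x * y⁻¹ ∈ D := by
    simp only [hD, Finset.mem_image, Finset.mem_filter, Finset.mem_product]
    exact ⟨⟨x, y⟩, ⟨⟨hx, hy⟩, hne⟩, rfl⟩
  set i := e ⟨x * y⁻¹, hdmem⟩ with hi
  have hval : ((e.symm i : {d // d ∈ D}) : H) = x * y⁻¹ := by rw [hi, Equiv.symm_apply_apply]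
  have h2 := congrFun hxy i
  simp only [Pi.monoidHom, MonoidHom.coe_mk, OneHom.coe_mk] at h2
  refine hφ i ?_
  rw [hval, map_mul, map_inv, show (φ i) x = (φ i) y from h2, mul_inv_cancel]

lemma finprod_mem_subset_single {M : Type*} [CommMonoid M] {α : Type*} {g : α → M} {s : Set α}
    {a : α} (ha : a ∈ s) (h : s ∩ Function.mulSupport g ⊆ {a}) : ∏ᶠ y ∈ s, g y = g a := by
  rw [← finprod_mem_inter_mulSupport]
  by_cases hg : g a = 1
  · have he : s ∩ Function.mulSupport g = ∅ := by
      ext x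
      simp only [Set.mem_empty_iff_false, iff_false]
      intro hx
      have := h hx
      simp only [Set.mem_singleton_iff] at this
      exact hx.2 (this ▸ hg)
    rw [he, finprod_mem_empty, hg]
  · have he : s ∩ Function.mulSupport g = {a} := by
      refine subset_antisymm h ?_
      rintro x rfl
      exact ⟨ha, hg⟩
    rw [he, finprod_mem_singleton]

lemma semidirect_finite {N G : Type*} [Group N] [Group G] (φ : G →* MulAut N)
    [Finite N] [Finite G] : Finite (N ⋊[φ] G) := by
  apply Finite.of_injective (fun x : N ⋊[φ] G => (x.left, x.right))
  rintro ⟨a, b⟩ ⟨c, d⟩ h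
  simp only [Prod.mk.injEq] at h
  exact SemidirectProduct.ext h.1 h.2

end AuxRF
set_option linter.unusedSectionVars false

section WreathAux

open Function SemidirectProduct

variable {Λ : Type u} {H : Type v} [Group Λ] [Group H]

lemma rp_coe_mul (f g : restrictedProduct H Λ) :
    ((f * g : restrictedProduct H Λ) : H → Λ) = (f : H → Λ) * (g : H → Λ) := rfl

lemma shiftAut_apply_coe (h : H) (f : restrictedProduct H Λ) (h' : H) :
    ((shiftAut Λ H h f : restrictedProduct H Λ) : H → Λ) h' = (f : H → Λ) (h⁻¹ * h') := rfl

variable [DecidableEq H]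

/-- The homomorphism `Λ →* ⊕_H Λ` supported at position `x`. -/
def singleAt (x : H) : Λ →* restrictedProduct H Λ :=
  (MonoidHom.mulSingle (fun _ : H => Λ) x).codRestrict _
    (fun a => (Set.finite_singleton x).subset Pi.mulSupport_mulSingle_subset)

lemma singleAt_coe (x : H) (a : Λ) :
    ((singleAt x a : restrictedProduct H Λ) : H → Λ) = Pi.mulSingle x a := rfl

lemma singleAt_apply_same (x : H) (a : Λ) :
    ((singleAt x a : restrictedProduct H Λ) : H → Λ) x = a := by
  rw [singleAt_coe]
  exact Pi.mulSingle_eq_same (M := fun _ : H => Λ) x a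

lemma singleAt_injective (x : H) : Function.Injective (singleAt (Λ := Λ) x) := by
  intro a b hab
  have := congrFun (congrArg (fun f : restrictedProduct H Λ => (f : H → Λ)) hab) x
  simpa [singleAt_apply_same] using this

lemma shiftAut_singleAt (h x : H) (a : Λ) :
    shiftAut Λ H h (singleAt x a) = singleAt (h * x) a := by
  apply Subtype.ext
  funext h'
  rw [shiftAut_apply_coe, singleAt_coe, singleAt_coe]
  by_cases hc : h' = h * x
  · subst hc
    rw [Pi.mulSingle_eq_same, show h⁻¹ * (h * x) = x by group, Pi.mulSingle_eq_same]
  · rw [Pi.mulSingle_eq_of_ne hc, Pi.mulSingle_eq_of_ne]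
    intro hcon
    exact hc (by rw [← hcon]; group)

lemma singleAt_commute {x y : H} (hxy : x ≠ y) (a b : Λ) :
    Commute (singleAt x a) (singleAt y b : restrictedProduct H Λ) := by
  have : Commute ((singleAt x a : restrictedProduct H Λ) : H → Λ)
      ((singleAt y b : restrictedProduct H Λ) : H → Λ) := by
    rw [singleAt_coe, singleAt_coe]
    exact Pi.mulSingle_commute (f := fun _ : H => Λ) hxy a b
  exact Subtype.ext (by simpa [Commute, SemiconjBy, rp_coe_mul] using this)

end WreathAux
section WreathMaps

open Function SemidirectProduct

variable {Λ : Type u} {H : Type v} [Group Λ] [Group H]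

/-- Pointwise application of `π` on the restricted product. -/
def ptwiseBaseMap {F : Type} [Group F] (π : Λ →* F) :
    restrictedProduct H Λ →* restrictedProduct H F where
  toFun f := ⟨fun h => π ((f : H → Λ) h), f.2.subset (fun h hh => by
    simp only [Function.mem_mulSupport] at hh ⊢
    intro hc
    exact hh (by rw [hc, map_one]))⟩
  map_one' := by
    apply Subtype.ext
    funext h
    simp [Subgroup.coe_one]
  map_mul' f g := by
    apply Subtype.ext
    funext h
    simp [rp_coe_mul]

/-- The pointwise wreath product map `Λ ≀ H →* F ≀ H`. -/
def wreathMapPtwise {F : Type} [Group F] (π : Λ →* F) :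
    Wreath Λ H →* Wreath F H :=
  SemidirectProduct.lift (inl.comp (ptwiseBaseMap π)) inr (by
    intro h
    ext f : 1
    show inl (ptwiseBaseMap π (shiftAut Λ H h f))
      = MulAut.conj (inr h) (inl (ptwiseBaseMap π f))
    rw [MulAut.conj_apply, ← map_inv, ← inl_aut]
    congr 1)

end WreathMaps
section FiberMap

open Function SemidirectProduct

variable {Λ : Type u} {H : Type v} [Group Λ] [Group H]
variable {A Q : Type} [CommGroup A] [Group Q]

noncomputable def fiberFun (π : Λ →* A) (q : H →* Q) (f : restrictedProduct H Λ) : Q → A :=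
  fun x => ∏ᶠ y ∈ {y : H | q y = x}, π ((f : H → Λ) y)

lemma mulSupport_pi_subset (π : Λ →* A) (f : restrictedProduct H Λ) :
    Function.mulSupport (fun y => π ((f : H → Λ) y)) ⊆ Function.mulSupport (f : H → Λ) := by
  intro y hy
  simp only [Function.mem_mulSupport] at hy ⊢
  intro hc
  exact hy (by rw [hc, map_one])

lemma fiberFun_support (π : Λ →* A) (q : H →* Q) (f : restrictedProduct H Λ) :
    Function.mulSupport (fiberFun π q f) ⊆ q '' Function.mulSupport (f : H → Λ) := by
  intro x hx
  simp only [Function.mem_mulSupport, fiberFun] at hx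
  by_contra hc
  apply hx
  apply finprod_mem_of_eqOn_one
  intro y hy
  simp only [Set.mem_setOf_eq] at hy
  have h1 : (f : H → Λ) y = 1 := by
    by_contra hf
    exact hc ⟨y, hf, hy⟩
  simp [h1]

noncomputable def fiberBaseMap (π : Λ →* A) (q : H →* Q) :
    restrictedProduct H Λ →* restrictedProduct Q A where
  toFun f := ⟨fiberFun π q f, (f.2.image q).subset (fiberFun_support π q f)⟩
  map_one' := by
    apply Subtype.ext
    funext x
    show fiberFun π q 1 x = 1
    apply finprod_mem_of_eqOn_one
    intro y _
    show π (((1 : restrictedProduct H Λ) : H → Λ) y) = 1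
    simp
  map_mul' f g := by
    apply Subtype.ext
    funext x
    show fiberFun π q (f * g) x = fiberFun π q f x * fiberFun π q g x
    unfold fiberFun
    have hf : ({y : H | q y = x} ∩
        Function.mulSupport fun y => π ((f : H → Λ) y)).Finite :=
      f.2.subset ((Set.inter_subset_right).trans (mulSupport_pi_subset π f))
    have hg : ({y : H | q y = x} ∩
        Function.mulSupport fun y => π ((g : H → Λ) y)).Finite :=
      g.2.subset ((Set.inter_subset_right).trans (mulSupport_pi_subset π g))
    calc ∏ᶠ y ∈ {y : H | q y = x}, π (((f * g : restrictedProduct H Λ) : H → Λ) y)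
        = ∏ᶠ y ∈ {y : H | q y = x}, (π ((f : H → Λ) y) * π ((g : H → Λ) y)) :=
          finprod_mem_congr rfl (fun y _ => by rw [rp_coe_mul, Pi.mul_apply, map_mul])
      _ = _ := finprod_mem_mul_distrib' hf hg

lemma fiberBaseMap_equivariant (π : Λ →* A) (q : H →* Q) (h : H) (f : restrictedProduct H Λ) :
    fiberBaseMap π q (shiftAut Λ H h f) = shiftAut A Q (q h) (fiberBaseMap π q f) := by
  apply Subtype.ext
  funext x
  show fiberFun π q (shiftAut Λ H h f) x = fiberFun π q f ((q h)⁻¹ * x)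
  unfold fiberFun
  have himg : {y : H | q y = x} = (fun z => h * z) '' {z : H | q z = (q h)⁻¹ * x} := by
    ext y
    simp only [Set.mem_setOf_eq, Set.mem_image]
    constructor
    · intro hy
      exact ⟨h⁻¹ * y, by rw [map_mul, map_inv, hy], by group⟩
    · rintro ⟨z, hz, rfl⟩
      rw [map_mul, hz]
      group
  calc ∏ᶠ y ∈ {y : H | q y = x}, π (((shiftAut Λ H h f : restrictedProduct H Λ) : H → Λ) y)
      = ∏ᶠ y ∈ {y : H | q y = x}, π ((f : H → Λ) (h⁻¹ * y)) :=
        finprod_mem_congr rfl (fun y _ => by rw [shiftAut_apply_coe])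
    _ = ∏ᶠ z ∈ {z : H | q z = (q h)⁻¹ * x}, π ((f : H → Λ) (h⁻¹ * (h * z))) := by
        rw [himg, finprod_mem_image ((mul_right_injective h).injOn)]
    _ = ∏ᶠ z ∈ {z : H | q z = (q h)⁻¹ * x}, π ((f : H → Λ) z) :=
        finprod_mem_congr rfl (fun z _ => by rw [inv_mul_cancel_left])

noncomputable def wreathMap (π : Λ →* A) (q : H →* Q) : Wreath Λ H →* Wreath A Q :=
  SemidirectProduct.lift (inl.comp (fiberBaseMap π q)) (inr.comp q) (by
    intro h
    ext f : 1
    show inl (fiberBaseMap π q (shiftAut Λ H h f))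
      = MulAut.conj (inr (q h)) (inl (fiberBaseMap π q f))
    rw [MulAut.conj_apply, ← map_inv, ← inl_aut, fiberBaseMap_equivariant])

end FiberMap
lemma wreath_rf_aux (Λ : Type u) (H : Type v) [Group Λ] [Group H] [Nontrivial Λ] :
    IsRFGroup (restrictedProduct H Λ ⋊[shiftAut Λ H] H) ↔
      (IsRFGroup Λ ∧ IsRFGroup H ∧ (Finite H ∨ ∀ a b : Λ, a * b = b * a)) := by
  classical
  constructor
  · intro hRF
    set ι : Λ →* restrictedProduct H Λ ⋊[shiftAut Λ H] H :=
      (SemidirectProduct.inl (φ := shiftAut Λ H)).comp (singleAt 1) with hι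
    have hιinj : Function.Injective ι := by
      intro a b hab
      exact singleAt_injective 1 (SemidirectProduct.inl_injective hab)
    have hΛ : IsRFGroup Λ := isRF_of_injective ι hιinj hRF
    have hH : IsRFGroup H :=
      isRF_of_injective (SemidirectProduct.inr (φ := shiftAut Λ H))
        SemidirectProduct.inr_injective hRF
    refine ⟨hΛ, hH, ?_⟩
    by_contra hcon
    push_neg at hcon
    obtain ⟨hHinf, hnab⟩ := hcon
    obtain ⟨a, b, hab⟩ := hnab
    haveI : Infinite H := hHinf
    set e : H →* restrictedProduct H Λ ⋊[shiftAut Λ H] H :=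
      SemidirectProduct.inr (φ := shiftAut Λ H) with he
    set c : Λ := a * b * a⁻¹ * b⁻¹ with hc
    have hc1 : c ≠ 1 := by
      intro h1
      apply hab
      have h2 : a * b * (b * a)⁻¹ = 1 := by rw [← h1, hc]; group
      exact mul_inv_eq_one.mp h2
    set w := ι c with hw
    have hw1 : w ≠ 1 := by
      intro h1
      exact hc1 (hιinj (by rw [← hw, h1, map_one]))
    obtain ⟨F, _, _, π, hsur, hπ⟩ := hRF w hw1
    obtain ⟨h₁, h₂, hne, heq⟩ := Finite.exists_ne_map_eq_of_infinite (fun x : H => π (e x))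
    set h : H := h₁⁻¹ * h₂ with hh
    have hh1 : h ≠ 1 := by
      intro h1
      exact hne (by rwa [hh, inv_mul_eq_one] at h1)
    have hπh : π (e h) = 1 := by
      have h5 : π (e h) = (π (e h₁))⁻¹ * π (e h₂) := by
        rw [hh, map_mul, map_inv, map_mul, map_inv]
      rw [h5, heq, inv_mul_cancel]
    set u := SemidirectProduct.inl (φ := shiftAut Λ H) (singleAt (1 : H) a) with hu
    set v := SemidirectProduct.inl (φ := shiftAut Λ H) (singleAt (1 : H) b) with hv
    set v' := SemidirectProduct.inl (φ := shiftAut Λ H) (singleAt h b) with hv'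
    have hcomm : Commute u v' :=
      (singleAt_commute (Ne.symm hh1) a b).map (SemidirectProduct.inl (φ := shiftAut Λ H))
    have hv'v : π v' = π v := by
      have h1 : v' = e h * v * e h⁻¹ := by
        rw [hv', hv, he]
        rw [← SemidirectProduct.inl_aut, shiftAut_singleAt, mul_one]
      rw [h1]
      simp [map_mul, map_inv, hπh]
    have hπcomm : Commute (π u) (π v) := by
      have h6 := hcomm.map π
      rwa [hv'v] at h6
    apply hπ
    have hwc : w = u * v * u⁻¹ * v⁻¹ := by
      rw [hw, hc, hι, hu, hv]
      simp only [map_mul, map_inv]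
      rfl
    rw [hwc, map_mul, map_mul, map_mul, map_inv, map_inv, hπcomm.eq]
    group
  · rintro ⟨hΛ, hH, hcase⟩
    apply isRF_of_sep
    intro g hg
    by_cases hr : SemidirectProduct.right g = 1
    · have hl : SemidirectProduct.left g ≠ 1 := by
        intro h1
        exact hg (SemidirectProduct.ext h1 hr)
      set f : restrictedProduct H Λ := SemidirectProduct.left g with hf
      have hfne : ∃ h₀ : H, (f : H → Λ) h₀ ≠ 1 := by
        by_contra hall
        push_neg at hall
        exact hl (Subtype.ext (funext fun x => hall x))
      obtain ⟨h₀, hh₀⟩ := hfne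
      obtain ⟨F, Fgrp, Ffin, π, hπsur, hπ⟩ := hΛ _ hh₀
      have hg_eq : g = SemidirectProduct.inl f := SemidirectProduct.ext rfl hr
      rcases hcase with hfin | hcomm
      · haveI := hfin
        haveI : Finite (restrictedProduct H F ⋊[shiftAut F H] H) := semidirect_finite _
        refine ⟨restrictedProduct H F ⋊[shiftAut F H] H, inferInstance, inferInstance,
          wreathMapPtwise π, ?_⟩
        have hval : wreathMapPtwise (H := H) π (SemidirectProduct.inl f) =
            SemidirectProduct.inl (ptwiseBaseMap π f) := by
          unfold wreathMapPtwise
          exact SemidirectProduct.lift_inl _ _ _ f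
        intro hcon
        rw [hg_eq] at hcon
        have h1 : ptwiseBaseMap π f = 1 :=
          SemidirectProduct.inl_injective
            ((hval.symm.trans hcon).trans (map_one SemidirectProduct.inl).symm)
        have h2 : ((ptwiseBaseMap π f : restrictedProduct H F) : H → F) h₀ = 1 := by
          have h3 := congrArg (fun x : restrictedProduct H F => (x : H → F) h₀) h1
          simpa using h3
        exact hπ h2
      · letI : CommGroup F :=
          { (inferInstance : Group F) with
            mul_comm := by
              intro x y
              obtain ⟨a', rfl⟩ := hπsur x
              obtain ⟨b', rfl⟩ := hπsur y
              rw [← map_mul, ← map_mul, hcomm] }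
        obtain ⟨Q, Qgrp, Qfin, q, hq⟩ := sep_finset hH f.2.toFinset
        haveI : Finite (restrictedProduct Q F ⋊[shiftAut F Q] Q) := semidirect_finite _
        refine ⟨ULift.{v} (restrictedProduct Q F ⋊[shiftAut F Q] Q), inferInstance, inferInstance,
          (MulEquiv.ulift.symm.toMonoidHom).comp (wreathMap π q), ?_⟩
        intro hcon
        have hcon2 : wreathMap π q g = 1 := by
          have h4 := congrArg (MulEquiv.ulift (α := restrictedProduct Q F ⋊[shiftAut F Q] Q)) hcon
          exact h4.trans (map_one _)
        rw [hg_eq] at hcon2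
        have hval : wreathMap π q (SemidirectProduct.inl f) =
            SemidirectProduct.inl (fiberBaseMap π q f) := by
          unfold wreathMap
          exact SemidirectProduct.lift_inl _ _ _ f
        have h1 : fiberBaseMap π q f = 1 :=
          SemidirectProduct.inl_injective
            ((hval.symm.trans hcon2).trans (map_one SemidirectProduct.inl).symm)
        have h2 : ((fiberBaseMap π q f : restrictedProduct Q F) : Q → F) (q h₀) = 1 := by
          have h3 := congrArg (fun x : restrictedProduct Q F => (x : Q → F) (q h₀)) h1
          simpa using h3
        have h3 : fiberFun π q f (q h₀) = π ((f : H → Λ) h₀) := by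
          show (∏ᶠ y ∈ {y : H | q y = q h₀}, π ((f : H → Λ) y)) = π ((f : H → Λ) h₀)
          apply finprod_mem_subset_single
          · show q h₀ = q h₀
            rfl
          · rintro y ⟨hy1, hy2⟩
            have hyT : y ∈ f.2.toFinset := by
              apply (Set.Finite.mem_toFinset (hs := _)).mpr
              intro hcy
              exact hy2 (by show π ((f : H → Λ) y) = 1; rw [hcy, map_one])
            have hh₀T : h₀ ∈ f.2.toFinset := by
              apply (Set.Finite.mem_toFinset (hs := _)).mpr
              exact hh₀
            exact hq y hyT h₀ hh₀T hy1
        apply hπ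
        rw [← h3]
        exact h2
    · obtain ⟨F, _, _, φ, _, hφ⟩ := hH _ hr
      refine ⟨ULift.{v} F, inferInstance, inferInstance,
        (MulEquiv.ulift.symm.toMonoidHom).comp
          (φ.comp (SemidirectProduct.rightHom (φ := shiftAut Λ H))), ?_⟩
      intro hcon
      apply hφ
      have h4 := congrArg (MulEquiv.ulift (α := F)) hcon
      simpa [SemidirectProduct.rightHom] using h4

theorem wreath_rf_iff (Λ : Type u) (H : Type v) [Group Λ] [Group H]
    [Countable Λ] [Countable H] [Nontrivial Λ] :
    IsRFGroup (Wreath Λ H) ↔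
      (IsRFGroup Λ ∧ IsRFGroup H ∧ (Finite H ∨ ∀ a b : Λ, a * b = b * a)) :=
  wreath_rf_aux Λ H
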